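/- Let F be a number field with adèle ring 𝔸. For every x ∈ 1 + t𝔸[[t]] there exists y ∈ 1 + tF[[t]] such that xy ∈ 1 + t𝔸⟨t⟩₊; consequently the natural map (1 + t𝔸⟨t⟩₊)/(1 + tF⟨t⟩₊) → (1 + t𝔸[[t]])/(1 + tF[[t]]) is an isomorphism of abelian groups. -/

import Mathlib

/-!
STATEMENT 10: Let `F` be a number field with adèle ring `𝔸`.  For every
`x ∈ 1 + t𝔸[[t]]` there exists `y ∈ 1 + tF[[t]]` such that
`x·y ∈ 1 + t𝔸⟨t⟩₊`; consequently the natural map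
`(1 + t𝔸⟨t⟩₊)/(1 + tF⟨t⟩₊) → (1 + t𝔸[[t]])/(1 + tF[[t]])` is an isomorphism
of (multiplicative) abelian groups.

Notation as in Statement 9: `𝔸[[t]] = PowerSeries (AdeleRing (RingOfIntegers F) F)`,
`x ∈ 1 + t𝔸[[t]]` means `constantCoeff x = 1`, and `𝔸⟨t⟩₊` is the set of
power series all of whose coefficients are integral at all but finitely many
finite places.  The isomorphism is expressed by: surjectivity — every class of
`(1 + t𝔸[[t]])/(1 + tF[[t]])` has a representative in `1 + t𝔸⟨t⟩₊` (this is
the displayed existence claim) — and injectivity: if two elements of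
`1 + t𝔸⟨t⟩₊` differ multiplicatively by an element of `1 + tF[[t]]`, then
that element lies in `1 + tF⟨t⟩₊`.
-/

set_option synthInstance.maxHeartbeats 1000000
set_option maxHeartbeats 1000000

section Helpers
open IsDedekindDomain IsDedekindDomain.HeightOneSpectrum Multiplicative
open scoped WithZero

section Approx

variable {R K : Type*} [CommRing R] [IsDedekindDomain R] [Field K] [Algebra R K]
  [IsFractionRing R K] (v : HeightOneSpectrum R)

lemma aux_between {a q : R} {n : ℕ} (ha : a ∈ v.asIdeal ^ n) (hq : q ∈ v.asIdeal ^ n)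
    (hq' : q ∉ v.asIdeal ^ (n + 1)) : ∃ s : R, a - s * q ∈ v.asIdeal ^ (n + 1) := by
  have hJ : v.asIdeal ^ (n + 1) ≤ Ideal.span {q} ⊔ v.asIdeal ^ (n + 1) := le_sup_right
  have hdvd : (Ideal.span {q} ⊔ v.asIdeal ^ (n + 1)) ∣ v.asIdeal ^ (n + 1) :=
    Ideal.dvd_iff_le.2 hJ
  obtain ⟨i, hi, hassoc⟩ := (dvd_prime_pow v.prime (n + 1)).1 hdvd
  rw [associated_iff_eq] at hassoc
  have hqmem : q ∈ v.asIdeal ^ i := by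
    rw [← hassoc]
    exact le_sup_left (α := Ideal R) (a := Ideal.span {q}) (Ideal.mem_span_singleton_self q)
  have hin : i ≤ n := by
    rcases Nat.lt_or_ge i (n + 1) with h | h
    · omega
    · exact absurd (Ideal.pow_le_pow_right h hqmem) hq'
  have hamem : a ∈ Ideal.span {q} ⊔ v.asIdeal ^ (n + 1) := by
    rw [hassoc]
    exact Ideal.pow_le_pow_right hin ha
  obtain ⟨y, hy, z, hz, hyz⟩ := Submodule.mem_sup.1 hamem
  obtain ⟨s, hs⟩ := Ideal.mem_span_singleton'.1 hy
  refine ⟨s, ?_⟩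
  rw [hs, show a - y = z by rw [← hyz]; ring]
  exact hz

end Approx

section Approx2

open scoped Multiplicative

variable {R K : Type*} [CommRing R] [IsDedekindDomain R] [Field K] [Algebra R K]
  [IsFractionRing R K] (v : HeightOneSpectrum R)

lemma exists_intVal_eq {b : R} (hb : b ≠ 0) :
    ∃ n : ℕ, v.intValuation b = WithZero.exp (-(n : ℤ)) :=
  ⟨multiplicity v.asIdeal (Ideal.span {b}), v.intValuation_eq_exp_neg_multiplicity hb⟩

lemma residue_step (k : K) (hk : v.valuation K k ≤ 1) :
    ∃ s : R, v.valuation K (k - algebraMap R K s) ≤ WithZero.exp (-1 : ℤ) := by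
  obtain ⟨⟨a, q⟩, hmk⟩ := IsLocalization.mk'_surjective (nonZeroDivisors R) k
  dsimp only at hmk
  by_cases ha0 : a = 0
  · refine ⟨0, ?_⟩
    have : k = 0 := by rw [← hmk, ha0, IsLocalization.mk'_zero]
    simp [this]
  · have hq0 : (q : R) ≠ 0 := nonZeroDivisors.ne_zero q.2
    obtain ⟨n, hn⟩ := exists_intVal_eq v hq0
    have hkv : v.intValuation a ≤ v.intValuation q := by
      rw [← hmk, valuation_of_mk'] at hk
      have hqpos : (0 : ℤᵐ⁰) < v.intValuation q := by
        rw [zero_lt_iff]; exact v.intValuation_ne_zero _ hq0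
      exact (div_le_one₀ hqpos).1 hk
    have haI : a ∈ v.asIdeal ^ n := by
      rw [← intValuation_le_pow_iff_mem]
      exact le_trans hkv (le_of_eq hn)
    have hqI : (q : R) ∈ v.asIdeal ^ n := by
      rw [← intValuation_le_pow_iff_mem]
      exact le_of_eq hn
    have hqI' : (q : R) ∉ v.asIdeal ^ (n + 1) := by
      rw [← intValuation_le_pow_iff_mem, hn, WithZero.exp_le_exp]
      push_cast
      omega
    obtain ⟨s, hs⟩ := aux_between v haI hqI hqI'
    refine ⟨s, ?_⟩
    have hQ0 : algebraMap R K (q : R) ≠ 0 :=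
      IsFractionRing.to_map_ne_zero_of_mem_nonZeroDivisors q.2
    have hsub : k - algebraMap R K s =
        algebraMap R K (a - s * (q : R)) / algebraMap R K (q : R) := by
      rw [← hmk, IsFractionRing.mk'_eq_div, div_sub' hQ0, map_sub, map_mul]
      ring_nf
    rw [hsub, map_div₀, valuation_of_algebraMap, valuation_of_algebraMap]
    have hval : v.intValuation (a - s * q) ≤ WithZero.exp (-((n : ℤ) + 1)) := by
      have h2 := (v.intValuation_le_pow_iff_mem (a - s * q) (n + 1)).2 hs
      push_cast at h2
      exact h2
    calc v.intValuation (a - s * q) / v.intValuation (q : R)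
        ≤ WithZero.exp (-((n : ℤ) + 1)) / WithZero.exp (-(n : ℤ)) := by
          rw [hn, div_eq_mul_inv, div_eq_mul_inv]
          exact mul_le_mul_left hval _
      _ = WithZero.exp (-1 : ℤ) := by
          rw [← WithZero.exp_sub]
          congr 1
          ring

end Approx2

section Approx3
open scoped Multiplicative

variable {R K : Type*} [CommRing R] [IsDedekindDomain R] [Field K] [Algebra R K]
  [IsFractionRing R K] (v : HeightOneSpectrum R)

lemma approx_depth (k : K) (hk : v.valuation K k ≤ 1) (n : ℕ) :
    ∃ r : R, v.valuation K (k - algebraMap R K r) ≤ WithZero.exp (-(n : ℤ)) := by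
  induction n with
  | zero => exact ⟨0, by simpa using hk⟩
  | succ n ih =>
    obtain ⟨r, hr⟩ := ih
    obtain ⟨π, hπ⟩ := v.intValuation_exists_uniformizer
    have hπ0 : π ≠ 0 := by
      intro h
      rw [h, map_zero] at hπ
      exact WithZero.exp_ne_zero hπ.symm
    have hPK : algebraMap R K π ≠ 0 := fun h =>
      hπ0 (IsFractionRing.injective R K (h.trans (map_zero _).symm))
    have hPval : v.valuation K (algebraMap R K π) = WithZero.exp (-1 : ℤ) := by
      rw [valuation_of_algebraMap, hπ]
    have hPn : v.valuation K (algebraMap R K π ^ n) = WithZero.exp (-(n : ℤ)) := by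
      rw [map_pow, hPval, ← WithZero.exp_nsmul]
      congr 1
      simp
    have hPn0 : algebraMap R K π ^ n ≠ 0 := pow_ne_zero _ hPK
    set k' := (k - algebraMap R K r) / algebraMap R K π ^ n with hk'def
    have hk'le : v.valuation K k' ≤ 1 := by
      rw [hk'def, map_div₀, hPn]
      refine (div_le_one₀ ?_).2 hr
      exact zero_lt_iff.2 WithZero.exp_ne_zero
    obtain ⟨s, hs⟩ := residue_step v k' hk'le
    refine ⟨r + π ^ n * s, ?_⟩
    have hkey : k - algebraMap R K (r + π ^ n * s) =
        algebraMap R K π ^ n * (k' - algebraMap R K s) := by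
      rw [hk'def]
      field_simp
      simp only [map_add, map_mul, map_pow]
      ring
    rw [hkey, Valuation.map_mul, hPn]
    calc WithZero.exp (-(n : ℤ)) * v.valuation K (k' - algebraMap R K s)
        ≤ WithZero.exp (-(n : ℤ)) * WithZero.exp (-1 : ℤ) := mul_le_mul_right hs _
      _ = WithZero.exp (-((n : ℕ) + 1 : ℕ) : ℤ) := by
          rw [← WithZero.exp_add]
          congr 1
          push_cast
          ring

end Approx3

section Approx4
open scoped Multiplicative

variable {R K : Type*} [CommRing R] [IsDedekindDomain R] [Field K] [Algebra R K]
  [IsFractionRing R K] (v : HeightOneSpectrum R)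

lemma approx_completion (c : v.adicCompletion K) (hc : Valued.v c ≤ 1) (n : ℕ) :
    ∃ r : R, Valued.v (c - algebraMap R (v.adicCompletion K) r) ≤
      WithZero.exp (-(n : ℤ)) := by
  have hdense : DenseRange (algebraMap K (v.adicCompletion K)) := denseRange_algebraMap K v
  obtain ⟨π, hπ⟩ := v.intValuation_exists_uniformizer
  set d : v.adicCompletion K := algebraMap R (v.adicCompletion K) (π ^ n) with hd
  have hdv : Valued.v d = WithZero.exp (-(n : ℤ)) := by
    rw [hd, valuedAdicCompletion_eq_valuation v, valuation_of_algebraMap, map_pow, hπ,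
      ← WithZero.exp_nsmul]
    congr 1
    simp
  have hd0 : Valued.v d ≠ 0 := by rw [hdv]; exact WithZero.exp_ne_zero
  have hball : {y : v.adicCompletion K | Valued.v (y - c) = Valued.v d} ∈ nhds (c + d) := by
    have h := Valued.locally_const hd0
    have hcont : Continuous fun y : v.adicCompletion K => y - c := continuous_sub_right c
    have h' : {y | Valued.v y = Valued.v d} ∈ nhds ((fun y => y - c) (c + d)) := by
      rw [show (fun y : v.adicCompletion K => y - c) (c + d) = d by simp]
      exact h
    exact hcont.continuousAt.preimage_mem_nhds h'
  obtain ⟨z, hzball, k, hk⟩ := mem_closure_iff_nhds.1 (hdense (c + d)) _ hball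
  have hn1 : WithZero.exp (-(n : ℤ)) ≤ 1 := by
    have : WithZero.exp (-(n : ℤ)) ≤ WithZero.exp 0 := WithZero.exp_le_exp.2 (by omega)
    simpa using this
  have h1 : Valued.v ((k : v.adicCompletion K) - c) ≤ WithZero.exp (-(n : ℤ)) := by
    have hz' : Valued.v (z - c) = Valued.v d := hzball
    show Valued.v (algebraMap K (v.adicCompletion K) k - c) ≤ _
    rw [hk, hz', hdv]
  have hkval : v.valuation K k ≤ 1 := by
    rw [← valuedAdicCompletion_eq_valuation' v k]
    calc Valued.v (k : v.adicCompletion K)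
        = Valued.v (((k : v.adicCompletion K) - c) + c) := by ring_nf
      _ ≤ max (Valued.v ((k : v.adicCompletion K) - c)) (Valued.v c) := Valuation.map_add _ _ _
      _ ≤ 1 := max_le (le_trans h1 hn1) hc
  obtain ⟨r, hr⟩ := approx_depth v k hkval n
  refine ⟨r, ?_⟩
  have h2 : Valued.v ((k : v.adicCompletion K) - algebraMap R (v.adicCompletion K) r) ≤
      WithZero.exp (-(n : ℤ)) := by
    have heq : (k : v.adicCompletion K) - algebraMap R (v.adicCompletion K) r =
        ((k - algebraMap R K r : K) : v.adicCompletion K) := by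
      rw [IsScalarTower.algebraMap_apply R K (v.adicCompletion K)]
      exact (map_sub (algebraMap K (v.adicCompletion K)) _ _).symm
    rw [heq, valuedAdicCompletion_eq_valuation']
    exact hr
  calc Valued.v (c - algebraMap R (v.adicCompletion K) r)
      = Valued.v ((c - (k : v.adicCompletion K)) +
          ((k : v.adicCompletion K) - algebraMap R (v.adicCompletion K) r)) := by ring_nf
    _ ≤ max (Valued.v (c - (k : v.adicCompletion K)))
          (Valued.v ((k : v.adicCompletion K) - algebraMap R (v.adicCompletion K) r)) :=
        Valuation.map_add _ _ _
    _ ≤ WithZero.exp (-(n : ℤ)) := by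
        refine max_le ?_ h2
        rw [Valuation.map_sub_swap]
        exact h1

end Approx4

section Decomp
open scoped Multiplicative

variable {R K : Type*} [CommRing R] [IsDedekindDomain R] [Field K] [Algebra R K]
  [IsFractionRing R K]

lemma finiteAdele_exists_mul_integral (a : FiniteAdeleRing R K) :
    ∃ (b : nonZeroDivisors R) (c : ∀ w : HeightOneSpectrum R, w.adicCompletionIntegers K),
      ∀ w, a w * algebraMap K (w.adicCompletion K) (algebraMap R K (b : R)) =
        (c w : w.adicCompletion K) := by
  classical
  have hfin : {w : HeightOneSpectrum R | ¬ a w ∈ w.adicCompletionIntegers K}.Finite :=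
    Filter.eventually_cofinite.1 a.2
  choose e he using fun w : HeightOneSpectrum R =>
    adicCompletion.mul_nonZeroDivisor_mem_adicCompletionIntegers w (a w)
  let b : nonZeroDivisors R := ∏ w ∈ hfin.toFinset, ⟨e w, (he w).1⟩
  refine ⟨b, fun w => ⟨a w * algebraMap K (w.adicCompletion K) (algebraMap R K (b : R)), ?_⟩,
    fun w => rfl⟩
  rw [← IsScalarTower.algebraMap_apply]
  have hb : (b : R) = ∏ w ∈ hfin.toFinset, e w := by simp [b]
  by_cases hw : w ∈ hfin.toFinset
  · rw [hb, ← Finset.mul_prod_erase _ _ hw, map_mul, ← mul_assoc]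
    exact mul_mem (he w).2 (coe_mem_adicCompletionIntegers w _)
  · have : a w ∈ w.adicCompletionIntegers K := by simpa using hw
    exact mul_mem this (coe_mem_adicCompletionIntegers w _)

lemma finiteAdele_decomp (a : FiniteAdeleRing R K) :
    ∃ f : K, ∀ w : HeightOneSpectrum R,
      a w + algebraMap K (w.adicCompletion K) f ∈
        w.adicCompletionIntegers K := by
  obtain ⟨b, c, hbc⟩ := finiteAdele_exists_mul_integral a
  have hb0 : (b : R) ≠ 0 := nonZeroDivisors.ne_zero b.2
  choose n hn using fun w : HeightOneSpectrum R => exists_intVal_eq w (b := (b : R)) hb0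
  have hfin : {w : HeightOneSpectrum R | w.intValuation (b : R) < 1}.Finite := by
    have h1 : Ideal.span {(b : R)} ≠ 0 := by simp [hb0]
    refine (Ideal.finite_factors h1).subset fun w hw => ?_
    rw [Set.mem_setOf_eq, intValuation_lt_one_iff_dvd] at hw
    exact hw
  have hcle : ∀ w : HeightOneSpectrum R, Valued.v ((c w : w.adicCompletion K)) ≤ 1 :=
    fun w => (c w).2
  choose r hr using fun w : HeightOneSpectrum R =>
    approx_completion w ((c w : w.adicCompletion K)) (hcle w) (n w)
  obtain ⟨g, hg⟩ := IsDedekindDomain.exists_forall_sub_mem_ideal (s := hfin.toFinset)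
    (fun w => w.asIdeal) (fun w => n w) (fun w _ => w.prime)
    (fun w _ w' _ hne h => hne (HeightOneSpectrum.ext h)) (fun w => r w.1)
  have hvalg : ∀ (x : R) (w : HeightOneSpectrum R),
      Valued.v (algebraMap R (w.adicCompletion K) x) = w.intValuation x := by
    intro x w
    exact (valuedAdicCompletion_eq_valuation w x).trans (valuation_of_algebraMap w x)
  have key : ∀ w : HeightOneSpectrum R,
      Valued.v ((c w : w.adicCompletion K) - algebraMap R (w.adicCompletion K) g) ≤
        w.intValuation (b : R) := by
    intro w
    by_cases hw : w ∈ hfin.toFinset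
    · have h2 : g - r w ∈ w.asIdeal ^ (n w) := hg w hw
      have h3 : Valued.v (algebraMap R (w.adicCompletion K) (r w) -
          algebraMap R (w.adicCompletion K) g) ≤ WithZero.exp (-(n w : ℤ)) := by
        rw [← (algebraMap R (w.adicCompletion K)).map_sub, hvalg, intValuation_le_pow_iff_mem]
        rw [show r w - g = -(g - r w) by ring]
        exact neg_mem h2
      calc Valued.v ((c w : w.adicCompletion K) - algebraMap R (w.adicCompletion K) g)
          = Valued.v (((c w : w.adicCompletion K) - algebraMap R (w.adicCompletion K) (r w)) +
              (algebraMap R (w.adicCompletion K) (r w) -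
                algebraMap R (w.adicCompletion K) g)) := by ring_nf
        _ ≤ max _ _ := Valuation.map_add _ _ _
        _ ≤ WithZero.exp (-(n w : ℤ)) := max_le (hr w) h3
        _ = w.intValuation (b : R) := (hn w).symm
    · have hbw : w.intValuation (b : R) = 1 := by
        have hle : w.intValuation (b : R) ≤ 1 := by
          exact w.intValuation_le_one (b : R)
        have hnlt : ¬ w.intValuation (b : R) < 1 := by simpa using hw
        exact le_antisymm hle (not_lt.1 hnlt)
      rw [hbw]
      calc Valued.v ((c w : w.adicCompletion K) - algebraMap R (w.adicCompletion K) g)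
          ≤ max (Valued.v ((c w : w.adicCompletion K)))
              (Valued.v (algebraMap R (w.adicCompletion K) g)) := Valuation.map_sub _ _ _
        _ ≤ 1 := by
            refine max_le (hcle w) ?_
            rw [hvalg]
            exact w.intValuation_le_one g
  refine ⟨-(algebraMap R K g / algebraMap R K (b : R)), fun w => ?_⟩
  have hpt : a w *
      algebraMap K (w.adicCompletion K) (algebraMap R K (b : R)) =
      (c w : w.adicCompletion K) :=
    hbc w
  have hbvne : w.intValuation (b : R) ≠ 0 := by
    exact w.intValuation_ne_zero _ hb0
  have hBval : Valued.v (algebraMap K (w.adicCompletion K) (algebraMap R K (b : R))) =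
      w.intValuation (b : R) := by
    rw [← IsScalarTower.algebraMap_apply R K (w.adicCompletion K)]
    exact hvalg _ w
  have hB0 : algebraMap K (w.adicCompletion K) (algebraMap R K (b : R)) ≠ 0 := by
    intro h
    rw [h, map_zero] at hBval
    exact hbvne hBval.symm
  have haw : a w =
      (c w : w.adicCompletion K) / algebraMap K (w.adicCompletion K) (algebraMap R K (b : R)) :=
    eq_div_of_mul_eq hB0 hpt
  rw [map_neg, map_div₀, haw]
  have hsimp : (c w : w.adicCompletion K) /
        algebraMap K (w.adicCompletion K) (algebraMap R K (b : R)) +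
        -(algebraMap K (w.adicCompletion K) (algebraMap R K g) /
          algebraMap K (w.adicCompletion K) (algebraMap R K (b : R))) =
      ((c w : w.adicCompletion K) - algebraMap R (w.adicCompletion K) g) /
        algebraMap K (w.adicCompletion K) (algebraMap R K (b : R)) := by
    rw [← sub_eq_add_neg, div_sub_div_same, ← IsScalarTower.algebraMap_apply R K (w.adicCompletion K)]
  rw [hsimp, mem_adicCompletionIntegers, map_div₀, hBval]
  exact (div_le_one₀ (zero_lt_iff.2 hbvne)).2 (key w)

end Decomp

section NF
open NumberField

variable (F : Type*) [Field F] [NumberField F]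

/-- Evaluation of the finite part of an adele at a finite place, as a ring hom. -/
def adeleEval (v : HeightOneSpectrum (RingOfIntegers F)) :
    AdeleRing (RingOfIntegers F) F →+* v.adicCompletion F where
  toFun a := a.2 v
  map_one' := rfl
  map_mul' _ _ := rfl
  map_zero' := rfl
  map_add' _ _ := rfl

lemma adeleEval_algebraMap (v : HeightOneSpectrum (RingOfIntegers F)) (c : F) :
    adeleEval F v (algebraMap F (AdeleRing (RingOfIntegers F) F) c) = algebraMap F (v.adicCompletion F) c :=
  rfl

lemma valued_adeleEval_algebraMap (v : HeightOneSpectrum (RingOfIntegers F)) (c : F) :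
    Valued.v (adeleEval F v (algebraMap F (AdeleRing (RingOfIntegers F) F) c)) = v.valuation F c := by
  rw [adeleEval_algebraMap]; exact valuedAdicCompletion_eq_valuation' v c

lemma adele_decomp (a : AdeleRing (RingOfIntegers F) F) :
    ∃ f : F, ∀ v : HeightOneSpectrum (RingOfIntegers F),
      adeleEval F v (a + algebraMap F (AdeleRing (RingOfIntegers F) F) f) ∈ v.adicCompletionIntegers F := by
  obtain ⟨f, hf⟩ := finiteAdele_decomp (R := RingOfIntegers F) (K := F) a.2
  refine ⟨f, fun v => ?_⟩
  have : adeleEval F v (a + algebraMap F (AdeleRing (RingOfIntegers F) F) f) =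
      a.2 v +
        algebraMap F (v.adicCompletion F) f := rfl
  rw [this]
  exact hf v

end NF

section NF2
open NumberField

variable (F : Type*) [Field F] [NumberField F]

/-- Recursively chosen coefficients of the correcting power series. -/
noncomputable def ycoef (x : PowerSeries (AdeleRing (RingOfIntegers F) F)) : ℕ → F
  | 0 => 1
  | (n + 1) => Classical.choose (adele_decomp F
      (∑ k ∈ Finset.range (n + 1),
        PowerSeries.coeff (k + 1) x *
          algebraMap F (AdeleRing (RingOfIntegers F) F) (ycoef x (n - k))))
  termination_by n => n
  decreasing_by all_goals omega

lemma ycoef_zero (x : PowerSeries (AdeleRing (RingOfIntegers F) F)) : ycoef F x 0 = 1 := by rw [ycoef]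

lemma ycoef_succ (x : PowerSeries (AdeleRing (RingOfIntegers F) F)) (n : ℕ) :
    ycoef F x (n + 1) = Classical.choose (adele_decomp F
      (∑ k ∈ Finset.range (n + 1),
        PowerSeries.coeff (k + 1) x *
          algebraMap F (AdeleRing (RingOfIntegers F) F) (ycoef F x (n - k)))) := by
  rw [ycoef]

lemma coeff_mul_succ (x : PowerSeries (AdeleRing (RingOfIntegers F) F))
    (hx : PowerSeries.constantCoeff x = 1) (n : ℕ) :
    PowerSeries.coeff (n + 1)
        (x * PowerSeries.map (algebraMap F (AdeleRing (RingOfIntegers F) F)) (PowerSeries.mk (ycoef F x))) =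
      (∑ k ∈ Finset.range (n + 1),
        PowerSeries.coeff (k + 1) x *
          algebraMap F (AdeleRing (RingOfIntegers F) F) (ycoef F x (n - k))) +
        algebraMap F (AdeleRing (RingOfIntegers F) F) (ycoef F x (n + 1)) := by
  rw [PowerSeries.coeff_mul, Finset.Nat.sum_antidiagonal_eq_sum_range_succ_mk,
    Finset.sum_range_succ']
  congr 1
  · refine Finset.sum_congr rfl fun k hk => ?_
    rw [PowerSeries.coeff_map, PowerSeries.coeff_mk, Nat.succ_sub_succ]
  · rw [PowerSeries.coeff_zero_eq_constantCoeff, hx, one_mul, PowerSeries.coeff_map,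
      PowerSeries.coeff_mk]
    norm_num

end NF2

end Helpers

open IsDedekindDomain NumberField

variable (F : Type*) [Field F] [NumberField F]

/-- The condition that a power series with adelic coefficients lies in `𝔸⟨t⟩`:
at all but finitely many finite places, all of its coefficients are integral. -/
def IsRestrictedPS (x : PowerSeries (AdeleRing (RingOfIntegers F) F)) : Prop :=
  {v : HeightOneSpectrum (RingOfIntegers F) |
    ¬ ∀ n : ℕ, (PowerSeries.coeff n x).2 v ∈ v.adicCompletionIntegers F}.Finite

/-- The condition that a power series over `F` lies in `F⟨t⟩`. -/
def IsRestrictedPSF (f : PowerSeries F) : Prop :=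
  {v : HeightOneSpectrum (RingOfIntegers F) |
    ¬ ∀ n : ℕ, v.valuation F (PowerSeries.coeff n f) ≤ 1}.Finite

theorem adelic_unit_power_series_quotient_iso :
    -- surjectivity: for every `x ∈ 1 + t𝔸[[t]]` there is `y ∈ 1 + tF[[t]]`
    -- with `x·y ∈ 1 + t𝔸⟨t⟩₊`
    (∀ x : PowerSeries (AdeleRing (RingOfIntegers F) F), PowerSeries.constantCoeff x = 1 →
      ∃ y : PowerSeries F, PowerSeries.constantCoeff y = 1 ∧
        IsRestrictedPS F (x * PowerSeries.map (algebraMap F (AdeleRing (RingOfIntegers F) F)) y)) ∧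
    -- injectivity: if `x, x' ∈ 1 + t𝔸⟨t⟩₊` and `x = x'·y` with
    -- `y ∈ 1 + tF[[t]]`, then `y ∈ 1 + tF⟨t⟩₊`
    (∀ x x' : PowerSeries (AdeleRing (RingOfIntegers F) F),
      PowerSeries.constantCoeff x = 1 → IsRestrictedPS F x →
      PowerSeries.constantCoeff x' = 1 → IsRestrictedPS F x' →
      ∀ y : PowerSeries F, PowerSeries.constantCoeff y = 1 →
        x = x' * PowerSeries.map (algebraMap F (AdeleRing (RingOfIntegers F) F)) y →
        IsRestrictedPSF F y) := by
  constructor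
  · intro x hx
    refine ⟨PowerSeries.mk (ycoef F x), ?_, ?_⟩
    · rw [PowerSeries.constantCoeff_mk, ycoef_zero]
    · have hall : ∀ (v : HeightOneSpectrum (RingOfIntegers F)) (n : ℕ),
          adeleEval F v (PowerSeries.coeff n
            (x * PowerSeries.map (algebraMap F (AdeleRing (RingOfIntegers F) F))
              (PowerSeries.mk (ycoef F x)))) ∈ v.adicCompletionIntegers F := by
        intro v n
        cases n with
        | zero =>
          have h0 : PowerSeries.coeff 0
              (x * PowerSeries.map (algebraMap F (AdeleRing (RingOfIntegers F) F))
                (PowerSeries.mk (ycoef F x))) = 1 := by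
            rw [PowerSeries.coeff_zero_eq_constantCoeff_apply, map_mul, hx, one_mul,
              ← PowerSeries.coeff_zero_eq_constantCoeff_apply, PowerSeries.coeff_map,
              PowerSeries.coeff_mk, ycoef_zero, map_one]
          rw [h0]
          exact one_mem _
        | succ n =>
          rw [coeff_mul_succ F x hx n, ycoef_succ F x n]
          exact Classical.choose_spec (adele_decomp F _) v
      refine Set.Finite.subset Set.finite_empty fun v hv => ?_
      exact absurd (fun n => hall v n) hv
  · intro x x' hx hres hx' hres' y hy0 heq
    refine Set.Finite.subset (hres.union hres') fun v hv => ?_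
    by_contra hvn
    have hXv : ∀ n : ℕ, adeleEval F v (PowerSeries.coeff n x) ∈
        v.adicCompletionIntegers F :=
      not_not.1 fun hcon => hvn (Set.mem_union_left _ hcon)
    have hX'v : ∀ n : ℕ, adeleEval F v (PowerSeries.coeff n x') ∈
        v.adicCompletionIntegers F :=
      not_not.1 fun hcon => hvn (Set.mem_union_right _ hcon)
    have main : ∀ n : ℕ, v.valuation F (PowerSeries.coeff n y) ≤ 1 := by
      intro n
      induction n using Nat.strong_induction_on with
      | _ n ih =>
        have h1 : PowerSeries.coeff n x =
            (∑ k ∈ Finset.range n, PowerSeries.coeff (k + 1) x' *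
              algebraMap F (AdeleRing (RingOfIntegers F) F) (PowerSeries.coeff (n - (k + 1)) y)) +
            algebraMap F (AdeleRing (RingOfIntegers F) F) (PowerSeries.coeff n y) := by
          rw [heq, PowerSeries.coeff_mul, Finset.Nat.sum_antidiagonal_eq_sum_range_succ_mk,
            Finset.sum_range_succ']
          simp only [PowerSeries.coeff_map, PowerSeries.coeff_zero_eq_constantCoeff_apply,
            hx', one_mul, Nat.sub_zero]
        have hcoeff : algebraMap F (AdeleRing (RingOfIntegers F) F) (PowerSeries.coeff n y) =
            PowerSeries.coeff n x -
            ∑ k ∈ Finset.range n, PowerSeries.coeff (k + 1) x' *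
              algebraMap F (AdeleRing (RingOfIntegers F) F) (PowerSeries.coeff (n - (k + 1)) y) := by
          rw [h1]; ring
        have hmem : adeleEval F v (algebraMap F (AdeleRing (RingOfIntegers F) F)
            (PowerSeries.coeff n y)) ∈ v.adicCompletionIntegers F := by
          rw [hcoeff, map_sub, map_sum]
          refine sub_mem (hXv n) (sum_mem fun k hk => ?_)
          rw [map_mul]
          refine mul_mem (hX'v (k + 1)) ?_
          rw [IsDedekindDomain.HeightOneSpectrum.mem_adicCompletionIntegers, valued_adeleEval_algebraMap]
          exact ih (n - (k + 1)) (by have := Finset.mem_range.1 hk; omega)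
        rw [← valued_adeleEval_algebraMap F v]
        exact hmem
    exact hv main
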